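/- arXiv:2510.27278 — 2 statements merged into one kernel-verified Lean document; each statement's English description precedes it below -/
import Mathlib

section
/- Assume (HP), (Hv) and (H1). Let k≥1 be an integer and λ∈ℂ with Re λ = v(θ1) or Re λ = v(θ2). Suppose ψ∈C¹([0,2];ℂ) satisfies ψ(0)=ψ(2)=0, ψ' is Lipschitz on [0,2], and for every y∈(0,2) with v(y)≠λ the second derivative ψ''(y) exists and ψ''(y) − k²·ψ(y) − (v''(y)/(v(y)−λ))·ψ(y) + (𝒫(y)/(v(y)−λ)²)·ψ(y) = 0. Then ψ is identically zero. (In particular, no λ whose real part equals v(θ1) or v(θ2) is an eigenvalue of the mode-k linearized Boussinesq operator.) -/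
open MeasureTheory Filter

noncomputable section

namespace Boussinesq

/-- Green's kernel of `∂_y² − m²` on `[0,2]` with Dirichlet boundary conditions. -/
def Gker (m : ℕ) (y z : ℝ) : ℝ :=
  -(Real.sinh (m * min y z) * Real.sinh (m * (2 - max y z))) / (m * Real.sinh (2 * m))

/-- Sup of `|f|` over `[0,2]` (the `L^∞(0,2)` norm for continuous `f`). -/
def supAbs (f : ℝ → ℝ) : ℝ := sSup ((fun y => |f y|) '' Set.Icc (0 : ℝ) 2)

/-- `L²(0,2)` norm. -/
def L2norm (f : ℝ → ℂ) : ℝ := (∫ y in (0:ℝ)..2, ‖f y‖ ^ 2) ^ (1/2 : ℝ)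

/-- Weighted Sobolev norm `‖f‖_{H_k^j}`. -/
def HkNorm (k j : ℕ) (f : ℝ → ℂ) : ℝ :=
  ∑ n ∈ Finset.range (j + 1), (k : ℝ) ^ (-(n : ℝ)) * L2norm (iteratedDeriv n f)

/-- Lebesgue measure restricted to `(0,2)`. -/
def mu0 : Measure ℝ := volume.restrict (Set.Ioo 0 2)

/-- Background data: gravity constant, shear and stratification profiles, the bounds on the
shear, and the endpoints of the stratified region. -/
structure Flow where
  g : ℝ
  v : ℝ → ℝ
  P : ℝ → ℝ
  c0 : ℝ
  C0 : ℝ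
  θ1 : ℝ
  θ2 : ℝ

namespace Flow

variable (F : Flow)

/-- `𝒫 = g·P`. -/
def calP : ℝ → ℝ := fun y => F.g * F.P y

/-- The local Richardson number `𝒥(y) = 𝒫(y)/v'(y)²`. -/
def J : ℝ → ℝ := fun y => F.calP y / (deriv F.v y) ^ 2

/-- `μ(y) = √(max(0, 1/4 − 𝒥(y)))`. -/
def mu : ℝ → ℝ := fun y => Real.sqrt (max 0 (1/4 - F.J y))

/-- Hypothesis (HP). -/
def HP : Prop :=
  0 < F.g ∧ ContDiff ℝ 2 F.P ∧ 0 < F.θ1 ∧ F.θ1 < F.θ2 ∧ F.θ2 < 2 ∧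
  (∀ y ∈ Set.Icc (0:ℝ) F.θ1 ∪ Set.Icc F.θ2 2, F.P y = 0) ∧
  (∀ y ∈ Set.Ioo F.θ1 F.θ2, 0 < F.P y)

/-- Hypothesis (Hv). -/
def Hv : Prop :=
  ContDiff ℝ 4 F.v ∧ 0 < F.c0 ∧ F.c0 ≤ F.C0 ∧
  (∀ y ∈ Set.Icc (0:ℝ) 2, F.c0 ≤ deriv F.v y ∧ deriv F.v y ≤ F.C0) ∧
  tsupport (iteratedDeriv 2 F.v) ⊆ Set.Ioo F.θ1 F.θ2

/-- Hypothesis (H1). -/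
def H1 : Prop :=
  F.c0⁻¹ * supAbs (iteratedDeriv 3 F.v)
    + (1/2) * F.c0⁻¹ ^ 2 * supAbs (iteratedDeriv 2 F.calP) < 1

/-- Hypothesis (H2). -/
def H2 : Prop :=
  ∃ yt ∈ Set.Icc (0:ℝ) 2,
    (∀ y ∈ Set.Icc (0:ℝ) 2, F.J y ≤ F.J yt) ∧
    (∀ y' ∈ Set.Icc (0:ℝ) 2, (∀ y ∈ Set.Icc (0:ℝ) 2, F.J y ≤ F.J y') → y' = yt) ∧
    (∀ y ∈ Set.Icc (0:ℝ) yt, iteratedDeriv 2 F.v y ≤ 0 ∧ 0 ≤ deriv F.J y) ∧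
    (∀ y ∈ Set.Icc yt (2:ℝ), 0 ≤ iteratedDeriv 2 F.v y ∧ deriv F.J y ≤ 0) ∧
    (∃ a b : ℝ, a ∈ Set.Icc (0:ℝ) 2 ∧ b ∈ Set.Icc (0:ℝ) 2 ∧ a ≠ b ∧
      F.J a = 1/4 ∧ F.J b = 1/4 ∧
      (∀ y ∈ Set.Icc (0:ℝ) 2, F.J y = 1/4 → y = a ∨ y = b))

/-- Hypothesis (H3): the linearized Euler operator has no eigenvalues nor
embedded eigenvalues. -/
def H3 : Prop :=
  ∀ m : ℕ, 1 ≤ m → ∀ lam : ℂ, ∀ f : ℝ → ℂ,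
    MemLp f 2 mu0 →
    (∀ᵐ y ∂mu0, y ∉ Set.Icc F.θ1 F.θ2 → f y = 0) →
    (∀ᵐ y ∂mu0, ((F.v y : ℂ) - lam) * f y
        = ((iteratedDeriv 2 F.v y : ℝ) : ℂ) * ∫ z in (0:ℝ)..2, (Gker m y z : ℂ) * f z) →
    (∀ᵐ y ∂mu0, f y = 0)

end Flow

/-- The partition of `[0,2]` into the non-stratified, weakly, mildly and strongly
stratified regimes. -/
structure Partition (F : Flow) where
  δ : ℝ
  ϖ11 : ℝ
  ϖ1 : ℝ
  ϖ12 : ℝ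
  ϖ21 : ℝ
  ϖ2 : ℝ
  ϖ22 : ℝ
  hδ0 : 0 < δ
  hδ : δ < 1/8
  h1 : F.θ1 < ϖ11
  h2 : ϖ11 < ϖ1
  h3 : ϖ1 < ϖ12
  h4 : ϖ12 < ϖ21
  h5 : ϖ21 < ϖ2
  h6 : ϖ2 < ϖ22
  h7 : ϖ22 < F.θ2
  hc1 : F.J ϖ1 = 1/4
  hc2 : F.J ϖ2 = 1/4
  hstrong : ∀ y ∈ Set.Ioo ϖ1 ϖ2, 1/4 < F.J y
  hweak : ∀ y ∈ Set.Ioo F.θ1 ϖ1 ∪ Set.Ioo ϖ2 F.θ2, 0 < F.J y ∧ F.J y < 1/4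
  hmild : ∀ y ∈ Set.Ioo ϖ11 ϖ12 ∪ Set.Ioo ϖ21 ϖ22, |F.J y - 1/4| ≤ δ

/-- The stream function `ψ(t,y) = ∫₀² G_k(y,z) ω(t,z) dz`. -/
def psi (k : ℕ) (ω : ℝ → ℝ → ℂ) (t y : ℝ) : ℂ :=
  ∫ z in (0:ℝ)..2, (Gker k y z : ℂ) * ω t z

/-- `(ω, ρ)` is a solution of the `k`-th Fourier mode of the Boussinesq system linearized
around the stably stratified shear flow, with initial data `(ω0, P·σ0)` compactly supported
inside the stratified region `(θ1, θ2)`. -/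
def IsSolution (F : Flow) (k : ℕ) (ω0 σ0 : ℝ → ℂ) (ω ρ : ℝ → ℝ → ℂ) : Prop :=
  ContDiff ℝ 5 F.v ∧
  ContDiff ℝ 3 ω0 ∧ ContDiff ℝ 4 σ0 ∧
  tsupport ω0 ⊆ Set.Ioo F.θ1 F.θ2 ∧ tsupport σ0 ⊆ Set.Ioo F.θ1 F.θ2 ∧
  ContinuousOn (fun p : ℝ × ℝ => ω p.1 p.2) (Set.Ici (0:ℝ) ×ˢ Set.Icc (0:ℝ) 2) ∧
  ContinuousOn (fun p : ℝ × ℝ => ρ p.1 p.2) (Set.Ici (0:ℝ) ×ˢ Set.Icc (0:ℝ) 2) ∧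
  (∀ y ∈ Set.Icc (0:ℝ) 2, ω 0 y = ω0 y ∧ ρ 0 y = (F.P y : ℂ) * σ0 y) ∧
  (∀ t : ℝ, 0 < t → ∀ y ∈ Set.Icc (0:ℝ) 2,
    HasDerivAt (fun s => ω s y)
      (-(Complex.I * (k : ℂ) * (F.v y : ℂ)) * ω t y
        + Complex.I * (k : ℂ) * ((iteratedDeriv 2 F.v y : ℝ) : ℂ) * psi k ω t y
        - Complex.I * (k : ℂ) * (F.g : ℂ) * ρ t y) t ∧
    HasDerivAt (fun s => ρ s y)
      (-(Complex.I * (k : ℂ) * (F.v y : ℂ)) * ρ t y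
        + Complex.I * (k : ℂ) * (F.P y : ℂ) * psi k ω t y) t)

/-- The weighted data norm `S_{k,j} = k^j (‖ω0 − v''σ0‖_{H_k^{j+1}} + k⁻¹‖σ0'' − k²σ0‖_{H_k^j})`. -/
def Sk (F : Flow) (k j : ℕ) (ω0 σ0 : ℝ → ℂ) : ℝ :=
  (k : ℝ) ^ j *
    (HkNorm k (j + 1) (fun y => ω0 y - ((iteratedDeriv 2 F.v y : ℝ) : ℂ) * σ0 y)
      + (k : ℝ)⁻¹ * HkNorm k j (fun y => iteratedDeriv 2 σ0 y - (k : ℂ) ^ 2 * σ0 y))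

end Boussinesq

namespace Boussinesq

section AuxLemmas

open Set

private lemma lin_bound' {f : ℝ → ℝ} {a M : ℝ} (hf : Differentiable ℝ f)
    (ha : a ∈ Set.Icc (0:ℝ) 2) (hfa : f a = 0)
    (hM : ∀ y ∈ Set.Icc (0:ℝ) 2, |deriv f y| ≤ M) :
    ∀ y ∈ Set.Icc (0:ℝ) 2, |f y| ≤ M * |y - a| := by
  intro y hy
  have := (convex_Icc (0:ℝ) 2).norm_image_sub_le_of_norm_deriv_le
    (fun x _ => hf x) (fun x hx => hM x hx) ha hy
  simpa [Real.norm_eq_abs, hfa] using this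

private lemma one_sided_sq' {f : ℝ → ℝ} {a M : ℝ} (hf : Differentiable ℝ f)
    (ha : a ∈ Set.Icc (0:ℝ) 2) (hfa : f a = 0)
    (hM : ∀ y ∈ Set.Icc (0:ℝ) 2, |deriv f y| ≤ M * |y - a|) :
    ∀ y ∈ Set.Icc (0:ℝ) 2, f y ≤ (1/2) * M * (y - a)^2 := by
  set u : ℝ → ℝ := fun y => (1/2) * M * (y - a)^2 - f y with hu_def
  have hud : ∀ y, HasDerivAt u (M * (y - a) - deriv f y) y := by
    intro y
    have h1 : HasDerivAt (fun y : ℝ => (1/2) * M * (y - a)^2) (M * (y - a)) y := by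
      have h0 : HasDerivAt (fun y : ℝ => (y - a)^2) (2 * (y - a)) y := by
        simpa using (((hasDerivAt_id y).sub_const a).fun_pow 2)
      have := h0.const_mul ((1:ℝ)/2 * M)
      exact this.congr_deriv (by ring)
    exact h1.sub (hf y).hasDerivAt
  have hu_diff : Differentiable ℝ u := fun y => (hud y).differentiableAt
  have hu_deriv : ∀ y, deriv u y = M * (y - a) - deriv f y := fun y => (hud y).deriv
  have hua : u a = 0 := by simp [hu_def, hfa]
  intro y hy
  rcases le_total a y with hay | hya
  · have hmono : MonotoneOn u (Icc a 2) := by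
      apply monotoneOn_of_deriv_nonneg (convex_Icc a 2) hu_diff.continuous.continuousOn
        hu_diff.differentiableOn
      intro x hx
      rw [interior_Icc] at hx
      have hx2 : x ∈ Icc (0:ℝ) 2 := ⟨le_trans ha.1 hx.1.le, hx.2.le⟩
      rw [hu_deriv]
      have := hM x hx2
      have hax : |x - a| = x - a := abs_of_nonneg (by linarith [hx.1])
      rw [hax] at this
      linarith [(abs_le.1 this).2]
    have := hmono ⟨le_refl a, ha.2⟩ ⟨hay, hy.2⟩ hay
    rw [hua] at this
    simpa [hu_def, sub_nonneg] using this
  · have hanti : AntitoneOn u (Icc 0 a) := by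
      apply antitoneOn_of_deriv_nonpos (convex_Icc 0 a) hu_diff.continuous.continuousOn
        hu_diff.differentiableOn
      intro x hx
      rw [interior_Icc] at hx
      have hx2 : x ∈ Icc (0:ℝ) 2 := ⟨hx.1.le, le_trans hx.2.le ha.2⟩
      rw [hu_deriv]
      have := hM x hx2
      have hax : |x - a| = a - x := by rw [abs_sub_comm]; exact abs_of_nonneg (by linarith [hx.2])
      rw [hax] at this
      linarith [(abs_le.1 this).1]
    have := hanti ⟨hy.1, hya⟩ ⟨ha.1, le_refl a⟩ hya
    rw [hua] at this
    simpa [hu_def, sub_nonneg] using this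

private lemma sq_bound' {f : ℝ → ℝ} {a M : ℝ} (hf : Differentiable ℝ f)
    (ha : a ∈ Set.Icc (0:ℝ) 2) (hfa : f a = 0)
    (hM : ∀ y ∈ Set.Icc (0:ℝ) 2, |deriv f y| ≤ M * |y - a|) :
    ∀ y ∈ Set.Icc (0:ℝ) 2, |f y| ≤ (1/2) * M * (y - a)^2 := by
  intro y hy
  have h1 := one_sided_sq' hf ha hfa hM y hy
  have h2 := one_sided_sq' (f := fun y => - f y) (M := M) hf.neg ha (by simp [hfa]) ?_ y hy
  · rw [abs_le]
    constructor
    · have h3 : - f y ≤ 1/2 * M * (y - a)^2 := h2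
      linarith
    · exact h1
  · intro x hx
    have : deriv (fun y => - f y) x = - deriv f x := deriv.neg
    rw [this, abs_neg]; exact hM x hx

private lemma aux_deriv_zero' {P : ℝ → ℝ} {c d x : ℝ} (hcd : c < d) (hx : x ∈ Set.Icc c d)
    (hP : DifferentiableAt ℝ P x) (h0 : ∀ y ∈ Set.Icc c d, P y = 0) : deriv P x = 0 := by
  have h1 : HasDerivWithinAt P (deriv P x) (Set.Icc c d) x := hP.hasDerivAt.hasDerivWithinAt
  have h2 : HasDerivWithinAt P 0 (Set.Icc c d) x :=
    (hasDerivWithinAt_const x _ (0:ℝ)).congr (fun y hy => h0 y hy) (h0 x hx)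
  have hu : UniqueDiffWithinAt ℝ (Set.Icc c d) x := uniqueDiffOn_Icc hcd x hx
  rw [← h1.derivWithin hu, h2.derivWithin hu]

private lemma le_supAbs' {f : ℝ → ℝ} (hf : ContinuousOn f (Set.Icc 0 2)) :
    ∀ y ∈ Set.Icc (0:ℝ) 2, |f y| ≤ supAbs f := by
  intro y hy
  exact le_csSup (isCompact_Icc.image_of_continuousOn hf.abs).bddAbove ⟨y, hy, rfl⟩

private lemma supAbs_nonneg' {f : ℝ → ℝ} (hf : ContinuousOn f (Set.Icc 0 2)) : 0 ≤ supAbs f :=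
  le_trans (abs_nonneg _) (le_supAbs' hf 0 (by norm_num))

end AuxLemmas


set_option maxHeartbeats 2000000

/-- No `λ` whose real part equals `v(θ1)` or `v(θ2)` is an eigenvalue of the mode-`k`
linearized Boussinesq operator: any solution of the Taylor–Goldstein equation with
Dirichlet boundary conditions vanishes identically. -/
theorem no_eigenvalue_at_boundary_of_stratification
    (F : Flow) (hHP : F.HP) (hHv : F.Hv) (hH1 : F.H1)
    (k : ℕ) (hk : 1 ≤ k) (lam : ℂ)
    (hlam : lam.re = F.v F.θ1 ∨ lam.re = F.v F.θ2)
    (ψ : ℝ → ℂ) (hψ : ContDiff ℝ 1 ψ)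
    (hψ0 : ψ 0 = 0) (hψ2 : ψ 2 = 0)
    (hLip : ∃ L : NNReal, LipschitzOnWith L (deriv ψ) (Set.Icc (0:ℝ) 2))
    (heq : ∀ y ∈ Set.Ioo (0:ℝ) 2, (F.v y : ℂ) ≠ lam →
      ∃ d : ℂ, HasDerivAt (deriv ψ) d y ∧
        d - (k : ℂ) ^ 2 * ψ y
          - (((iteratedDeriv 2 F.v y : ℝ) : ℂ) / ((F.v y : ℂ) - lam)) * ψ y
          + ((F.calP y : ℂ) / ((F.v y : ℂ) - lam) ^ 2) * ψ y = 0) :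
    ∀ y ∈ Set.Icc (0:ℝ) 2, ψ y = 0 := by
  classical
  obtain ⟨hg, hP2, hθ1, hθ12, hθ22, hPzero, hPpos⟩ := hHP
  obtain ⟨hv4, hc0, hcC, hvd, hsupp⟩ := hHv
  have hcalP2 : ContDiff ℝ 2 F.calP := contDiff_const.mul hP2
  have hcalPd : Differentiable ℝ F.calP := hcalP2.differentiable (by norm_num)
  have hvdiff : Differentiable ℝ F.v := hv4.differentiable (by norm_num)
  obtain ⟨a, haI, hare, hPa, hPa', hv2a⟩ :
      ∃ a : ℝ, a ∈ Set.Ioo (0:ℝ) 2 ∧ lam.re = F.v a ∧ F.calP a = 0 ∧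
        deriv F.calP a = 0 ∧ iteratedDeriv 2 F.v a = 0 := by
    rcases hlam with h | h
    · refine ⟨F.θ1, ⟨hθ1, hθ12.trans hθ22⟩, h, ?_, ?_, ?_⟩
      · simp [Flow.calP, hPzero F.θ1 (Or.inl ⟨hθ1.le, le_refl _⟩)]
      · exact aux_deriv_zero' hθ1 ⟨hθ1.le, le_refl _⟩ (hcalPd _)
          (fun y hy => by simp [Flow.calP, hPzero y (Or.inl hy)])
      · exact image_eq_zero_of_notMem_tsupport
          (fun hmem => lt_irrefl F.θ1 (hsupp hmem).1)
    · refine ⟨F.θ2, ⟨hθ1.trans hθ12, hθ22⟩, h, ?_, ?_, ?_⟩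
      · simp [Flow.calP, hPzero F.θ2 (Or.inr ⟨le_refl _, hθ22.le⟩)]
      · exact aux_deriv_zero' hθ22 ⟨le_refl _, hθ22.le⟩ (hcalPd _)
          (fun y hy => by simp [Flow.calP, hPzero y (Or.inr hy)])
      · exact image_eq_zero_of_notMem_tsupport
          (fun hmem => lt_irrefl F.θ2 (hsupp hmem).2)
  have haIcc : a ∈ Set.Icc (0:ℝ) 2 := ⟨haI.1.le, haI.2.le⟩
  set M3 := supAbs (iteratedDeriv 3 F.v) with hM3
  set M2 := supAbs (iteratedDeriv 2 F.calP) with hM2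
  have hv3c : Continuous (iteratedDeriv 3 F.v) := hv4.continuous_iteratedDeriv 3 (by norm_num)
  have hP2c : Continuous (iteratedDeriv 2 F.calP) :=
    hcalP2.continuous_iteratedDeriv 2 (by norm_num)
  have hM3n : 0 ≤ M3 := supAbs_nonneg' hv3c.continuousOn
  have hM2n : 0 ≤ M2 := supAbs_nonneg' hP2c.continuousOn
  have hv2b : ∀ y ∈ Set.Icc (0:ℝ) 2, |iteratedDeriv 2 F.v y| ≤ M3 * |y - a| := by
    apply lin_bound' (hv4.differentiable_iteratedDeriv 2 (by norm_num)) haIcc hv2a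
    intro y hy
    rw [← iteratedDeriv_succ]
    exact le_supAbs' hv3c.continuousOn y hy
  have hP1b : ∀ y ∈ Set.Icc (0:ℝ) 2, |deriv F.calP y| ≤ M2 * |y - a| := by
    have hd : Differentiable ℝ (deriv F.calP) := by
      have := hcalP2.differentiable_iteratedDeriv 1 (by norm_num)
      rwa [iteratedDeriv_one] at this
    apply lin_bound' hd haIcc hPa'
    intro y hy
    have h2 : deriv (deriv F.calP) y = iteratedDeriv 2 F.calP y := by
      rw [iteratedDeriv_succ, iteratedDeriv_one]
    rw [h2]
    exact le_supAbs' hP2c.continuousOn y hy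
  have hP0b : ∀ y ∈ Set.Icc (0:ℝ) 2, |F.calP y| ≤ 1/2 * M2 * (y - a)^2 :=
    sq_bound' hcalPd haIcc hPa hP1b
  have hvlow : ∀ y ∈ Set.Icc (0:ℝ) 2, F.c0 * |y - a| ≤ |F.v y - F.v a| := by
    have hwd : Differentiable ℝ (fun y => F.v y - F.c0 * y) := by
      apply hvdiff.sub
      exact fun x => ((hasDerivAt_id x).const_mul F.c0).differentiableAt
    have hw : MonotoneOn (fun y => F.v y - F.c0 * y) (Set.Icc 0 2) := by
      apply monotoneOn_of_deriv_nonneg (convex_Icc 0 2)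
        hwd.continuous.continuousOn hwd.differentiableOn
      intro x hx
      rw [interior_Icc] at hx
      have hdx : deriv (fun y => F.v y - F.c0 * y) x = deriv F.v x - F.c0 := by
        have hmul : HasDerivAt (fun y : ℝ => F.c0 * y) F.c0 x := by
          simpa using (hasDerivAt_id x).const_mul F.c0
        exact ((hvdiff x).hasDerivAt.sub hmul).deriv
      rw [hdx]
      have := (hvd x ⟨hx.1.le, hx.2.le⟩).1
      linarith
    intro y hy
    rcases le_total a y with h | h
    · have h1 := hw haIcc hy h
      simp only at h1
      rw [abs_of_nonneg (sub_nonneg.2 h)]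
      have h2 := le_abs_self (F.v y - F.v a)
      nlinarith
    · have h1 := hw hy haIcc h
      simp only at h1
      rw [abs_of_nonpos (sub_nonpos.2 h)]
      have h2 := neg_abs_le (F.v y - F.v a)
      nlinarith
  have hnl : ∀ y ∈ Set.Icc (0:ℝ) 2, F.c0 * |y - a| ≤ ‖(F.v y : ℂ) - lam‖ := by
    intro y hy
    have h1 : ((F.v y : ℂ) - lam).re = F.v y - F.v a := by
      simp [Complex.sub_re, hare]
    calc F.c0 * |y - a| ≤ |F.v y - F.v a| := hvlow y hy
      _ = |((F.v y : ℂ) - lam).re| := by rw [h1]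
      _ ≤ ‖(F.v y : ℂ) - lam‖ := Complex.abs_re_le_norm _
  have hne : ∀ y ∈ Set.Icc (0:ℝ) 2, y ≠ a → (F.v y : ℂ) ≠ lam := by
    intro y hy hya h
    have h1 := hnl y hy
    rw [h, sub_self, norm_zero] at h1
    have h2 : 0 < F.c0 * |y - a| := mul_pos hc0 (abs_pos.2 (sub_ne_zero.2 hya))
    linarith
  set B := F.c0⁻¹ * M3 + 1/2 * F.c0⁻¹ ^ 2 * M2 with hB
  have hB1 : B < 1 := hH1
  have hBn : 0 ≤ B := by positivity
  set Qc : ℝ → ℂ := fun y => (k:ℂ)^2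
      + ((iteratedDeriv 2 F.v y : ℝ) : ℂ) / ((F.v y : ℂ) - lam)
      - ((F.calP y : ℝ) : ℂ) / ((F.v y : ℂ) - lam)^2 with hQc
  have hQb : ∀ y ∈ Set.Icc (0:ℝ) 2, y ≠ a → ‖Qc y - (k:ℂ)^2‖ ≤ B := by
    intro y hy hya
    have habs : (0:ℝ) < |y - a| := abs_pos.2 (sub_ne_zero.2 hya)
    have hd0 : (0:ℝ) < F.c0 * |y - a| := mul_pos hc0 habs
    have hnl' := hnl y hy
    have hyane : (y - a) ≠ 0 := sub_ne_zero.2 hya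
    have hc0ne : F.c0 ≠ 0 := ne_of_gt hc0
    have e1 : ‖((iteratedDeriv 2 F.v y : ℝ) : ℂ) / ((F.v y : ℂ) - lam)‖ ≤ F.c0⁻¹ * M3 := by
      rw [norm_div, Complex.norm_real, Real.norm_eq_abs]
      calc |iteratedDeriv 2 F.v y| / ‖(F.v y : ℂ) - lam‖
          ≤ (M3 * |y - a|) / (F.c0 * |y - a|) :=
            div_le_div₀ (by positivity) (hv2b y hy) hd0 hnl'
        _ = F.c0⁻¹ * M3 := by
            field_simp
    have e2 : ‖((F.calP y : ℝ) : ℂ) / ((F.v y : ℂ) - lam)^2‖ ≤ 1/2 * F.c0⁻¹^2 * M2 := by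
      rw [norm_div, Complex.norm_real, Real.norm_eq_abs, norm_pow]
      have hsq : (F.c0 * |y - a|)^2 ≤ ‖(F.v y : ℂ) - lam‖^2 := by
        apply pow_le_pow_left₀ hd0.le hnl'
      calc |F.calP y| / ‖(F.v y : ℂ) - lam‖^2
          ≤ (1/2 * M2 * (y - a)^2) / ((F.c0 * |y - a|)^2) :=
            div_le_div₀ (by positivity) (hP0b y hy) (by positivity) hsq
        _ = 1/2 * F.c0⁻¹^2 * M2 := by
            rw [mul_pow, sq_abs]
            field_simp
    have hsplit : Qc y - (k:ℂ)^2
        = ((iteratedDeriv 2 F.v y : ℝ) : ℂ) / ((F.v y : ℂ) - lam)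
          - ((F.calP y : ℝ) : ℂ) / ((F.v y : ℂ) - lam)^2 := by
      rw [hQc]; ring
    rw [hsplit, hB]
    exact le_trans (norm_sub_le _ _) (add_le_add e1 e2)
  have hk2 : (1:ℝ) ≤ (k:ℝ)^2 := by
    have : (1:ℝ) ≤ (k:ℝ) := by exact_mod_cast hk
    nlinarith
  have hQre : ∀ y ∈ Set.Icc (0:ℝ) 2, y ≠ a → 1 - B ≤ (Qc y).re := by
    intro y hy hya
    have h2 : |(Qc y - (k:ℂ)^2).re| ≤ B :=
      le_trans (Complex.abs_re_le_norm _) (hQb y hy hya)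
    have hkre : ((k:ℂ)^2).re = (k:ℝ)^2 := by
      rw [← Complex.ofReal_natCast, ← Complex.ofReal_pow, Complex.ofReal_re]
    have h3 : (Qc y).re = (k:ℝ)^2 + (Qc y - (k:ℂ)^2).re := by
      have h4 := Complex.sub_re (Qc y) ((k:ℂ)^2)
      rw [hkre] at h4
      linarith
    rw [h3]
    have := (abs_le.1 h2).1
    linarith
  -- the energy function and its derivative
  have hψc : Continuous ψ := hψ.continuous
  have hdψc : Continuous (deriv ψ) := hψ.continuous_deriv le_rfl
  have hψd : Differentiable ℝ ψ := hψ.differentiable (by norm_num)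
  set H : ℝ → ℂ := fun y => Qc y * (ψ y * star (ψ y)) + deriv ψ y * star (deriv ψ y) with hHdef
  set h : ℝ → ℂ := fun y => deriv ψ y * star (ψ y) with hhdef
  have hderiv : ∀ y ∈ Set.Ioo (0:ℝ) 2, y ≠ a → HasDerivAt h (H y) y := by
    intro y hy hya
    obtain ⟨d, hdd, he⟩ := heq y hy (hne y ⟨hy.1.le, hy.2.le⟩ hya)
    have hdQ : d = Qc y * ψ y := by rw [hQc]; linear_combination he
    have h1 : HasDerivAt (fun y => star (ψ y)) (star (deriv ψ y)) y :=
      ((hψd y).hasDerivAt).star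
    have h2 := hdd.mul h1
    rw [hdQ] at h2
    refine h2.congr_deriv ?_
    rw [hHdef]
    ring
  -- integrability of H
  obtain ⟨Cp, hCp⟩ := isCompact_Icc.exists_bound_of_continuousOn
    (hψc.continuousOn (s := Set.Icc (0:ℝ) 2))
  obtain ⟨Cg, hCg⟩ := isCompact_Icc.exists_bound_of_continuousOn
    (hdψc.continuousOn (s := Set.Icc (0:ℝ) 2))
  have hCp0 : 0 ≤ Cp := le_trans (norm_nonneg _) (hCp 0 (by norm_num))
  have hCg0 : 0 ≤ Cg := le_trans (norm_nonneg _) (hCg 0 (by norm_num))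
  set Cb := ((k:ℝ)^2 + B) * Cp^2 + Cg^2 with hCb
  have hHb : ∀ y ∈ Set.Icc (0:ℝ) 2, y ≠ a → ‖H y‖ ≤ Cb := by
    intro y hy hya
    have hQn : ‖Qc y‖ ≤ (k:ℝ)^2 + B := by
      have h1 : Qc y = (k:ℂ)^2 + (Qc y - (k:ℂ)^2) := by ring
      rw [h1]
      refine le_trans (norm_add_le _ _) ?_
      have h2 : ‖(k:ℂ)^2‖ = (k:ℝ)^2 := by
        rw [norm_pow, Complex.norm_natCast]
      rw [h2]
      linarith [hQb y hy hya]
    calc ‖H y‖ ≤ ‖Qc y‖ * (‖ψ y‖ * ‖ψ y‖) + ‖deriv ψ y‖ * ‖deriv ψ y‖ := by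
          refine le_trans (norm_add_le _ _) ?_
          rw [norm_mul, norm_mul, norm_mul, norm_star, norm_star]
      _ ≤ Cb := by
          rw [hCb]
          have t1 : ‖ψ y‖ * ‖ψ y‖ ≤ Cp^2 := by nlinarith [hCp y hy, norm_nonneg (ψ y)]
          have t2 : ‖deriv ψ y‖ * ‖deriv ψ y‖ ≤ Cg^2 := by
            nlinarith [hCg y hy, norm_nonneg (deriv ψ y)]
          have t3 : ‖Qc y‖ * (‖ψ y‖ * ‖ψ y‖) ≤ ((k:ℝ)^2 + B) * Cp^2 :=
            mul_le_mul hQn t1 (by positivity) (by positivity)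
          linarith
  have hHm : AEStronglyMeasurable H (volume.restrict (Set.Ioc (0:ℝ) 2)) := by
    apply Measurable.aestronglyMeasurable
    rw [hHdef, hQc]
    apply Measurable.add
    · apply Measurable.mul
      · apply Measurable.sub
        · apply Measurable.add measurable_const
          exact (Complex.measurable_ofReal.comp
              (hv4.continuous_iteratedDeriv 2 (by norm_num)).measurable).div
            ((Complex.measurable_ofReal.comp hvdiff.continuous.measurable).sub measurable_const)
        · exact (Complex.measurable_ofReal.comp (hcalP2.continuous.measurable)).div
            (((Complex.measurable_ofReal.comp hvdiff.continuous.measurable).sub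
              measurable_const).pow measurable_const)
      · exact (hψc.measurable.mul (continuous_star.measurable.comp hψc.measurable))
    · exact (hdψc.measurable.mul (continuous_star.measurable.comp hdψc.measurable))
  have haen : ∀ᵐ y ∂(volume.restrict (Set.Ioc (0:ℝ) 2)), y ≠ a := by
    refine ae_iff.2 ?_
    have hset : {y : ℝ | ¬ y ≠ a} = {a} := by ext x; simp
    rw [hset, Measure.restrict_apply (measurableSet_singleton a)]
    exact measure_mono_null Set.inter_subset_left Real.volume_singleton
  have hHint : IntegrableOn H (Set.Ioc (0:ℝ) 2) := by
    apply Integrable.mono' (g := fun _ => Cb) (integrableOn_const (by simp)) hHm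
    filter_upwards [haen, ae_restrict_mem measurableSet_Ioc] with y hya hy
    exact hHb y (Set.Ioc_subset_Icc_self hy) hya
  have hHi : IntervalIntegrable H volume 0 2 := by
    rw [intervalIntegrable_iff_integrableOn_Ioc_of_le (by norm_num)]
    exact hHint
  have hsub1 : Set.uIcc (0:ℝ) a ⊆ Set.uIcc (0:ℝ) 2 := by
    rw [Set.uIcc_of_le haIcc.1, Set.uIcc_of_le (by norm_num : (0:ℝ) ≤ 2)]
    exact Set.Icc_subset_Icc (le_refl _) haIcc.2
  have hsub2 : Set.uIcc a 2 ⊆ Set.uIcc (0:ℝ) 2 := by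
    rw [Set.uIcc_of_le haIcc.2, Set.uIcc_of_le (by norm_num : (0:ℝ) ≤ 2)]
    exact Set.Icc_subset_Icc haIcc.1 (le_refl _)
  have hhc : Continuous h := by
    rw [hhdef]
    exact hdψc.mul (continuous_star.comp hψc)
  have hI1 : ∫ y in (0:ℝ)..a, H y = h a - h 0 := by
    apply intervalIntegral.integral_eq_sub_of_hasDeriv_right_of_le haIcc.1
      hhc.continuousOn
      (fun x hx => (hderiv x ⟨hx.1, lt_of_lt_of_le hx.2 haIcc.2⟩
        (ne_of_lt hx.2)).hasDerivWithinAt)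
      (hHi.mono_set hsub1)
  have hI2 : ∫ y in a..(2:ℝ), H y = h 2 - h a := by
    apply intervalIntegral.integral_eq_sub_of_hasDeriv_right_of_le haIcc.2
      hhc.continuousOn
      (fun x hx => (hderiv x ⟨lt_of_le_of_lt haIcc.1 hx.1, hx.2⟩
        (ne_of_gt hx.1)).hasDerivWithinAt)
      (hHi.mono_set hsub2)
  have hI : ∫ y in (0:ℝ)..2, H y = 0 := by
    rw [← intervalIntegral.integral_add_adjacent_intervals
      (hHi.mono_set hsub1) (hHi.mono_set hsub2), hI1, hI2]
    rw [hhdef]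
    simp [hψ0, hψ2]
  have hIre : ∫ y in (0:ℝ)..2, (H y).re = 0 := by
    have h2le : (0:ℝ) ≤ 2 := by norm_num
    rw [intervalIntegral.integral_of_le h2le]
    have h1 := integral_re hHint
    simp only [RCLike.re_to_complex] at h1
    rw [h1, ← intervalIntegral.integral_of_le h2le, hI, Complex.zero_re]
  have hlowc : Continuous fun y => (1 - B) * Complex.normSq (ψ y) :=
    continuous_const.mul (Complex.continuous_normSq.comp hψc)
  have hlowI : IntervalIntegrable (fun y => (1 - B) * Complex.normSq (ψ y)) volume 0 2 :=
    hlowc.intervalIntegrable 0 2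
  have hHreI : IntervalIntegrable (fun y => (H y).re) volume 0 2 := by
    rw [intervalIntegrable_iff_integrableOn_Ioc_of_le (by norm_num)]
    have := hHint.re
    simpa [RCLike.re_to_complex, IntegrableOn] using this
  have haen' : ∀ᵐ y ∂(volume.restrict (Set.Icc (0:ℝ) 2)), y ≠ a := by
    refine ae_iff.2 ?_
    have hset : {y : ℝ | ¬ y ≠ a} = {a} := by ext x; simp
    rw [hset, Measure.restrict_apply (measurableSet_singleton a)]
    exact measure_mono_null Set.inter_subset_left Real.volume_singleton
  have hmulconj : ∀ z : ℂ, z * star z = (Complex.normSq z : ℂ) := fun z => Complex.mul_conj z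
  have hmono : (∫ y in (0:ℝ)..2, (1 - B) * Complex.normSq (ψ y))
      ≤ ∫ y in (0:ℝ)..2, (H y).re := by
    apply intervalIntegral.integral_mono_ae_restrict (by norm_num) hlowI hHreI
    filter_upwards [haen', ae_restrict_mem measurableSet_Icc] with y hya hy
    have hre : (H y).re = (Qc y).re * Complex.normSq (ψ y) + Complex.normSq (deriv ψ y) := by
      rw [hHdef]
      simp only [hmulconj]
      simp [Complex.add_re, Complex.mul_re]
    rw [hre]
    have h1 := hQre y hy hya
    nlinarith [Complex.normSq_nonneg (ψ y), Complex.normSq_nonneg (deriv ψ y)]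
  have hge : 0 ≤ ∫ y in (0:ℝ)..2, (1 - B) * Complex.normSq (ψ y) :=
    intervalIntegral.integral_nonneg (by norm_num)
      (fun y _ => mul_nonneg (by linarith) (Complex.normSq_nonneg _))
  have hzero : ∫ y in (0:ℝ)..2, (1 - B) * Complex.normSq (ψ y) = 0 :=
    le_antisymm (le_of_le_of_eq hmono hIre) hge
  have hfI : IntegrableOn (fun y => (1 - B) * Complex.normSq (ψ y)) (Set.Ioc (0:ℝ) 2) := by
    rw [← intervalIntegrable_iff_integrableOn_Ioc_of_le (by norm_num : (0:ℝ) ≤ 2)]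
    exact hlowI
  have hae0 : (fun y => (1 - B) * Complex.normSq (ψ y))
      =ᵐ[volume.restrict (Set.Ioc (0:ℝ) 2)] 0 := by
    rw [← integral_eq_zero_iff_of_nonneg_ae
      (Eventually.of_forall (fun y => mul_nonneg (by linarith) (Complex.normSq_nonneg _))) hfI]
    rw [← intervalIntegral.integral_of_le (by norm_num : (0:ℝ) ≤ 2)]
    exact hzero
  intro y hy
  rcases eq_or_lt_of_le hy.1 with h0 | h0
  · rw [← h0]; exact hψ0
  rcases eq_or_lt_of_le hy.2 with h2 | h2
  · rw [h2]; exact hψ2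
  by_contra hpsi
  have hsq : 0 < Complex.normSq (ψ y) := Complex.normSq_pos.2 hpsi
  set U := ((fun x => Complex.normSq (ψ x)) ⁻¹' Set.Ioi 0) ∩ Set.Ioo (0:ℝ) 2 with hU
  have hUopen : IsOpen U :=
    (isOpen_Ioi.preimage (Complex.continuous_normSq.comp hψc)).inter isOpen_Ioo
  have hyU : y ∈ U := ⟨hsq, h0, h2⟩
  have hUsub : U ⊆ {x | ¬ (1 - B) * Complex.normSq (ψ x) = (0 : ℝ → ℝ) x} := by
    intro x hx
    have h3 : 0 < Complex.normSq (ψ x) := hx.1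
    have h4 : 0 < 1 - B := by linarith
    simp only [Set.mem_setOf_eq, Pi.zero_apply]
    exact ne_of_gt (mul_pos h4 h3)
  have hnull : volume.restrict (Set.Ioc (0:ℝ) 2)
      {x | ¬ (1 - B) * Complex.normSq (ψ x) = (0 : ℝ → ℝ) x} = 0 := ae_iff.1 hae0
  have hUnull : volume U = 0 := by
    have h3 : volume.restrict (Set.Ioc (0:ℝ) 2) U = 0 := measure_mono_null hUsub hnull
    rw [Measure.restrict_apply hUopen.measurableSet] at h3
    rwa [Set.inter_eq_self_of_subset_left
      (subset_trans Set.inter_subset_right Set.Ioo_subset_Ioc_self)] at h3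
  exact absurd hUnull (ne_of_gt (hUopen.measure_pos volume ⟨y, hyU⟩))


end Boussinesq
end
end

section
/- For every t≥0 and every y∈[0,θ1]∪[θ2,2] (the non-stratified region), one has ω(t,y)=0 and ρ(t,y)=0. That is, the vorticity and density perturbations of the mode-k linearized Boussinesq evolution remain supported in the stratified region (θ1,θ2) for all times. -/
open MeasureTheory Filter

noncomputable section

namespace Boussinesq


private lemma zero_of_ode (c : ℂ) (f : ℝ → ℂ)
    (hf : ContinuousOn f (Set.Ici 0))
    (hd : ∀ t : ℝ, 0 < t → HasDerivAt f (c * f t) t)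
    (h0 : f 0 = 0) : ∀ t : ℝ, 0 ≤ t → f t = 0 := by
  intro t ht
  rcases eq_or_lt_of_le ht with h | h
  · rw [← h]; exact h0
  set g : ℝ → ℂ := fun s => Complex.exp (-c * s) * f s with hgdef
  have hgc : ContinuousOn g (Set.Ici 0) :=
    ((Complex.continuous_exp.comp (continuous_const.mul Complex.continuous_ofReal)).continuousOn).mul hf
  have hgd : ∀ s : ℝ, 0 < s → HasDerivAt g 0 s := by
    intro s hs
    have h1 : HasDerivAt (fun u : ℝ => -c * (u : ℂ)) (-c) s := by
      simpa using (Complex.ofRealCLM.hasDerivAt (x := s)).const_mul (-c)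
    have h2 : HasDerivAt (fun u : ℝ => Complex.exp (-c * u)) (Complex.exp (-c * s) * (-c)) s :=
      h1.cexp
    have h3 := h2.mul (hd s hs)
    convert h3 using 1
    · rfl
    · rfl
    ring
  have key : ∀ ε : ℝ, 0 < ε → ε ≤ t → g t = g ε := by
    intro ε hε hεt
    have hsub : Set.Icc ε t ⊆ Set.Ici (0 : ℝ) :=
      Set.Icc_subset_Ici_self.trans (Set.Ici_subset_Ici.2 hε.le)
    have := constant_of_has_deriv_right_zero (f := g) (a := ε) (b := t)
      (hgc.mono hsub)
      (fun x hx => (hgd x (lt_of_lt_of_le hε hx.1)).hasDerivWithinAt)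
    exact this t (Set.right_mem_Icc.2 hεt)
  have h1 : Filter.Tendsto g (nhdsWithin 0 (Set.Ioi 0)) (nhds (g 0)) :=
    ((hgc 0 Set.self_mem_Ici).tendsto).mono_left (nhdsWithin_mono _ Set.Ioi_subset_Ici_self)
  have h2 : Filter.Tendsto g (nhdsWithin 0 (Set.Ioi 0)) (nhds (g t)) := by
    refine Filter.Tendsto.congr' ?_ tendsto_const_nhds
    filter_upwards [Ioc_mem_nhdsGT_of_mem (Set.left_mem_Ico.2 h)] with ε hε
    exact key ε hε.1 hε.2
  have hgt : g t = g 0 := tendsto_nhds_unique h2 h1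
  have hz : Complex.exp (-c * t) * f t = 0 := by
    simpa [hgdef, h0] using hgt
  exact (mul_eq_zero.1 hz).resolve_left (Complex.exp_ne_zero _)

/-- The vorticity and density perturbations remain supported in the stratified region:
`ω(t,y) = 0` and `ρ(t,y) = 0` for all `t ≥ 0` and `y ∈ [0,θ1] ∪ [θ2,2]`. -/
theorem support_preserved
    (F : Flow) (hHP : F.HP) (hHv : F.Hv)
    (k : ℕ) (hk : 1 ≤ k) (ω0 σ0 : ℝ → ℂ) (ω ρ : ℝ → ℝ → ℂ)
    (hsol : IsSolution F k ω0 σ0 ω ρ) :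
    ∀ t : ℝ, 0 ≤ t →
      ∀ y ∈ Set.Icc (0:ℝ) F.θ1 ∪ Set.Icc F.θ2 (2:ℝ),
        ω t y = 0 ∧ ρ t y = 0 := by
  obtain ⟨_, _, _, hsω0, hsσ0, hcω, hcρ, hinit, hode⟩ := hsol
  obtain ⟨hg, _, hθ1, hθ12, hθ2, hPz, _⟩ := hHP
  intro t ht y hy
  -- y is in [0,2]
  have hy2 : y ∈ Set.Icc (0:ℝ) 2 := by
    rcases hy with h | h
    · exact ⟨h.1, h.2.trans (le_of_lt (hθ12.trans hθ2))⟩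
    · exact ⟨le_trans (le_of_lt (hθ1.trans hθ12)) h.1, h.2⟩
  have hyout : y ∉ Set.Ioo F.θ1 F.θ2 := by
    rcases hy with h | h
    · exact fun hc => absurd h.2 (not_le.2 hc.1)
    · exact fun hc => absurd h.1 (not_le.2 hc.2)
  have hP0 : F.P y = 0 := hPz y hy
  have hv2 : iteratedDeriv 2 F.v y = 0 :=
    image_eq_zero_of_notMem_tsupport (fun hc => hyout (hHv.2.2.2.2 hc))
  have hω00 : ω0 y = 0 :=
    image_eq_zero_of_notMem_tsupport (fun hc => hyout (hsω0 hc))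
  -- continuity in time at fixed y
  have hcωy : ContinuousOn (fun s => ω s y) (Set.Ici (0:ℝ)) :=
    hcω.comp (continuous_id.prodMk continuous_const).continuousOn
      (fun s hs => Set.mk_mem_prod hs hy2)
  have hcρy : ContinuousOn (fun s => ρ s y) (Set.Ici (0:ℝ)) :=
    hcρ.comp (continuous_id.prodMk continuous_const).continuousOn
      (fun s hs => Set.mk_mem_prod hs hy2)
  set c : ℂ := -(Complex.I * (k : ℂ) * (F.v y : ℂ)) with hc
  -- ρ vanishes
  have hρ0 : ρ 0 y = 0 := by
    rw [(hinit y hy2).2, hP0]; simp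
  have hρ : ∀ s : ℝ, 0 ≤ s → ρ s y = 0 := by
    refine zero_of_ode c (fun s => ρ s y) hcρy ?_ hρ0
    intro s hs
    have := (hode s hs y hy2).2
    simpa [hP0, hc, neg_mul, mul_assoc] using this
  refine ⟨?_, hρ t ht⟩
  -- ω vanishes
  have hω0' : ω 0 y = 0 := by rw [(hinit y hy2).1]; exact hω00
  refine zero_of_ode c (fun s => ω s y) hcωy ?_ hω0' t ht
  intro s hs
  have := (hode s hs y hy2).1
  simpa [hv2, hρ s hs.le, hc, neg_mul, mul_assoc] using this

end Boussinesq
end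
end
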